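/- Let N, L, c_sp be positive integers, let P be an L-level sparse block collection with sparsity constant c_sp, and let b ∈ ℝ^N. Let (A_k)_{k≥0}, (Â_k)_{k≥0} be sequences of matrices in ℝ^{N×N} with W_k := A_k − Â_k, let (x_k)_{k≥0} be a sequence in ℝ^N, let (M_k)_{k≥0} be subsets of P, and let 0 < θ < 1. Assume for every k ≥ 0: (i) the update rule (A_{k+1})_{ij} = (Â_k)_{ij} if (i,j) ∈ t×s for some (t,s) ∈ M_k and (A_{k+1})_{ij} = (A_k)_{ij} otherwise; (ii) the Dörfler marking condition Σ_{(t,s)∈M_k} ‖(W_k)_{ts}(x_k)_s‖₂² ≥ θ²·η_k², where η_k² := Σ_{(t,s)∈P} ‖(W_k)_{ts}(x_k)_s‖₂²; (iii) A_k is invertible with ‖A_k^{-1}‖₂ ≤ C for a constant C independent of k; (iv) ‖W_k‖₂ ≤ C' for a constant C' independent of k. Assume moreover δ_k := ‖b − A_k x_k‖₂ → 0, ‖A_{k+1} − A_k‖₂ → 0, and ‖Â_{k+1} − Â_k‖₂ → 0 as k → ∞. Then η_k → 0 as k → ∞. -/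

import Mathlib

open Finset

/-- The Euclidean norm on `ℝ^N`. -/
noncomputable def enorm {N : ℕ} (v : Fin N → ℝ) : ℝ :=
  Real.sqrt (∑ i, v i ^ 2)

/-- `‖M_{ts} x_s‖₂² = Σ_{i∈t} (Σ_{j∈s} M_{ij} x_j)²`. -/
def blockNormSq {N : ℕ} (M : Matrix (Fin N) (Fin N) ℝ)
    (t s : Finset (Fin N)) (x : Fin N → ℝ) : ℝ :=
  ∑ i ∈ t, (∑ j ∈ s, M i j * x j) ^ 2

/-- An `L`-level sparse block collection with sparsity constant `c_sp`: a finite set `P`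
of blocks `(t,s)`, `t,s ⊆ {1,…,N}`, with a level function `lvl : P → {1,…,L}` such that
the product index sets are pairwise disjoint, row (resp. column) clusters of blocks of
the same level are equal or disjoint, and on each level at most `c_sp` blocks share a
given row (resp. column) cluster. -/
structure SparseBlockCollection (N L csp : ℕ) where
  P : Finset (Finset (Fin N) × Finset (Fin N))
  lvl : Finset (Fin N) × Finset (Fin N) → ℕ
  lvl_range : ∀ b ∈ P, 1 ≤ lvl b ∧ lvl b ≤ L
  prod_disjoint : ∀ b ∈ P, ∀ b' ∈ P, b ≠ b' → Disjoint (b.1 ×ˢ b.2) (b'.1 ×ˢ b'.2)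
  rows_eq_or_disjoint : ∀ b ∈ P, ∀ b' ∈ P, lvl b = lvl b' → b.1 = b'.1 ∨ Disjoint b.1 b'.1
  cols_eq_or_disjoint : ∀ b ∈ P, ∀ b' ∈ P, lvl b = lvl b' → b.2 = b'.2 ∨ Disjoint b.2 b'.2
  row_sparsity : ∀ ℓ : ℕ, ∀ t : Finset (Fin N),
    (P.filter (fun b => lvl b = ℓ ∧ b.1 = t)).card ≤ csp
  col_sparsity : ∀ ℓ : ℕ, ∀ s : Finset (Fin N),
    (P.filter (fun b => lvl b = ℓ ∧ b.2 = s)).card ≤ csp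

/-- The spectral (Euclidean operator) norm of a matrix: the supremum of `‖Mx‖₂` over the
unit ball `‖x‖₂ ≤ 1`. -/
noncomputable def specNorm {N : ℕ} (M : Matrix (Fin N) (Fin N) ℝ) : ℝ :=
  sSup {r : ℝ | ∃ x : Fin N → ℝ, _root_.enorm x ≤ 1 ∧ r = _root_.enorm (M.mulVec x)}

lemma enorm_nonneg {N : ℕ} (v : Fin N → ℝ) : 0 ≤ _root_.enorm v := Real.sqrt_nonneg _

lemma enorm_sq {N : ℕ} (v : Fin N → ℝ) : _root_.enorm v ^ 2 = ∑ i, v i ^ 2 :=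
  Real.sq_sqrt (Finset.sum_nonneg fun i _ => sq_nonneg _)

lemma enorm_zero_vec {N : ℕ} : _root_.enorm (0 : Fin N → ℝ) = 0 := by
  simp [_root_.enorm]

lemma enorm_eq_norm {N : ℕ} (v : Fin N → ℝ) :
    _root_.enorm v = ‖(WithLp.equiv 2 (Fin N → ℝ)).symm v‖ := by
  rw [EuclideanSpace.norm_eq]
  simp [_root_.enorm, Real.norm_eq_abs, sq_abs]

lemma enorm_sub_le_vec {N : ℕ} (u v : Fin N → ℝ) : _root_.enorm (u - v) ≤ _root_.enorm u + _root_.enorm v := by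
  simp only [enorm_eq_norm]
  rw [show (WithLp.equiv 2 (Fin N → ℝ)).symm (u - v)
      = (WithLp.equiv 2 (Fin N → ℝ)).symm u - (WithLp.equiv 2 (Fin N → ℝ)).symm v from rfl]
  exact norm_sub_le _ _

lemma enorm_smul_vec {N : ℕ} (c : ℝ) (v : Fin N → ℝ) : _root_.enorm (c • v) = |c| * _root_.enorm v := by
  simp only [_root_.enorm, Pi.smul_apply, smul_eq_mul, mul_pow, ← Finset.mul_sum]
  rw [Real.sqrt_mul (sq_nonneg c), Real.sqrt_sq_eq_abs]

lemma enorm_mulVec_sq_le {N : ℕ} (M : Matrix (Fin N) (Fin N) ℝ) (x : Fin N → ℝ) :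
    _root_.enorm (M.mulVec x) ^ 2 ≤ (∑ i, ∑ j, M i j ^ 2) * _root_.enorm x ^ 2 := by
  rw [enorm_sq, enorm_sq, Finset.sum_mul]
  refine Finset.sum_le_sum fun i _ => ?_
  exact Finset.sum_mul_sq_le_sq_mul_sq Finset.univ (fun j => M i j) x

lemma specNorm_bddAbove {N : ℕ} (M : Matrix (Fin N) (Fin N) ℝ) :
    BddAbove {r : ℝ | ∃ x : Fin N → ℝ, _root_.enorm x ≤ 1 ∧ r = _root_.enorm (M.mulVec x)} := by
  refine ⟨Real.sqrt (∑ i, ∑ j, M i j ^ 2), fun r hr => ?_⟩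
  obtain ⟨x, hx, rfl⟩ := hr
  have h1 : _root_.enorm (M.mulVec x) ^ 2 ≤ (∑ i, ∑ j, M i j ^ 2) * 1 := by
    refine le_trans (enorm_mulVec_sq_le M x) ?_
    refine mul_le_mul_of_nonneg_left ?_ (Finset.sum_nonneg fun i _ => Finset.sum_nonneg fun j _ => sq_nonneg _)
    calc _root_.enorm x ^ 2 ≤ 1 ^ 2 := pow_le_pow_left₀ (enorm_nonneg x) hx 2
    _ = 1 := one_pow 2
  rw [mul_one] at h1
  calc _root_.enorm (M.mulVec x) = Real.sqrt (_root_.enorm (M.mulVec x) ^ 2) := (Real.sqrt_sq (enorm_nonneg _)).symm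
  _ ≤ Real.sqrt (∑ i, ∑ j, M i j ^ 2) := Real.sqrt_le_sqrt h1

lemma specNorm_nonneg {N : ℕ} (M : Matrix (Fin N) (Fin N) ℝ) : 0 ≤ specNorm M := by
  refine le_csSup (specNorm_bddAbove M) ?_
  exact ⟨0, by simp [enorm_zero_vec], by simp [Matrix.mulVec_zero, enorm_zero_vec]⟩

lemma enorm_mulVec_le {N : ℕ} (M : Matrix (Fin N) (Fin N) ℝ) (y : Fin N → ℝ) :
    _root_.enorm (M.mulVec y) ≤ specNorm M * _root_.enorm y := by
  rcases eq_or_ne y 0 with rfl | hy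
  · simp [Matrix.mulVec_zero, enorm_zero_vec]
  · have hy0 : 0 < _root_.enorm y := by
      rcases (enorm_nonneg y).lt_or_eq with h | h
      · exact h
      · exfalso; apply hy; funext i
        have hz : _root_.enorm y ^ 2 = 0 := by rw [← h]; ring
        rw [enorm_sq] at hz
        have := (Finset.sum_eq_zero_iff_of_nonneg (fun i _ => sq_nonneg (y i))).mp hz i (Finset.mem_univ i)
        exact pow_eq_zero_iff (two_ne_zero) |>.mp this
    have key : _root_.enorm (M.mulVec ((_root_.enorm y)⁻¹ • y)) ≤ specNorm M := by
      refine le_csSup (specNorm_bddAbove M) ?_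
      refine ⟨(_root_.enorm y)⁻¹ • y, ?_, rfl⟩
      rw [enorm_smul_vec, abs_of_nonneg (inv_nonneg.mpr hy0.le), inv_mul_cancel₀ hy0.ne']
    rw [Matrix.mulVec_smul, enorm_smul_vec, abs_of_nonneg (inv_nonneg.mpr hy0.le)] at key
    calc _root_.enorm (M.mulVec y) = _root_.enorm y * ((_root_.enorm y)⁻¹ * _root_.enorm (M.mulVec y)) := by
          field_simp
    _ ≤ _root_.enorm y * specNorm M := mul_le_mul_of_nonneg_left key hy0.le
    _ = specNorm M * _root_.enorm y := mul_comm _ _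

lemma frob_le_specNorm {N : ℕ} (M : Matrix (Fin N) (Fin N) ℝ) :
    ∑ i, ∑ j, M i j ^ 2 ≤ (N : ℝ) * specNorm M ^ 2 := by
  have col : ∀ j : Fin N, ∑ i, M i j ^ 2 ≤ specNorm M ^ 2 := by
    intro j
    have h1 : _root_.enorm (M.mulVec (Pi.single j 1)) ≤ specNorm M * _root_.enorm (Pi.single j 1) :=
      enorm_mulVec_le M _
    have h2 : _root_.enorm (Pi.single j (1:ℝ) : Fin N → ℝ) = 1 := by
      simp [_root_.enorm, Pi.single_apply, Finset.sum_ite_eq']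
    rw [h2, mul_one] at h1
    have h3 : _root_.enorm (M.mulVec (Pi.single j 1)) ^ 2 ≤ specNorm M ^ 2 :=
      pow_le_pow_left₀ (enorm_nonneg _) h1 2
    rw [enorm_sq] at h3
    have h4 : ∀ i, M.mulVec (Pi.single j 1) i = M i j := fun i => by
      simp [Matrix.mulVec, dotProduct, Pi.single_apply]
    calc ∑ i, M i j ^ 2 = ∑ i, M.mulVec (Pi.single j 1) i ^ 2 := by
          simp_rw [h4]
    _ ≤ specNorm M ^ 2 := h3
  calc ∑ i, ∑ j, M i j ^ 2 = ∑ j, ∑ i, M i j ^ 2 := Finset.sum_comm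
  _ ≤ ∑ _j : Fin N, specNorm M ^ 2 := Finset.sum_le_sum fun j _ => col j
  _ = (N : ℝ) * specNorm M ^ 2 := by simp [Finset.sum_const, nsmul_eq_mul]

open Filter

/-- Lemma 3: convergence of the error estimator `η_k` produced by the block-adaptive ACA
algorithm, under the update rule, the Dörfler marking condition, uniform bounds on
`‖A_k^{-1}‖₂` and `‖W_k‖₂`, and convergence to zero of the residuals `δ_k` and of the
matrix increments. -/
theorem estimator_convergence
    (N L csp : ℕ) (hN : 0 < N) (hL : 0 < L) (hcsp : 0 < csp)
    (C : SparseBlockCollection N L csp)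
    (b : Fin N → ℝ)
    (Ak Ahk : ℕ → Matrix (Fin N) (Fin N) ℝ)
    (Wk : ℕ → Matrix (Fin N) (Fin N) ℝ) (hW : ∀ k, Wk k = Ak k - Ahk k)
    (xk : ℕ → Fin N → ℝ)
    (Mk : ℕ → Finset (Finset (Fin N) × Finset (Fin N))) (hMk : ∀ k, Mk k ⊆ C.P)
    (θ : ℝ) (hθ0 : 0 < θ) (hθ1 : θ < 1)
    (ηk : ℕ → ℝ) (hηk0 : ∀ k, 0 ≤ ηk k)
    (hηk : ∀ k, ηk k ^ 2 = ∑ p ∈ C.P, blockNormSq (Wk k) p.1 p.2 (xk k))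
    (hupdate : ∀ k, ∀ i j : Fin N,
      (if ∃ p ∈ Mk k, i ∈ p.1 ∧ j ∈ p.2 then Ak (k + 1) i j = Ahk k i j
        else Ak (k + 1) i j = Ak k i j))
    (hmark : ∀ k, θ ^ 2 * ηk k ^ 2 ≤ ∑ p ∈ Mk k, blockNormSq (Wk k) p.1 p.2 (xk k))
    (hinv : ∀ k, IsUnit (Ak k).det)
    (Cbound : ℝ) (hinvbound : ∀ k, specNorm (Ak k)⁻¹ ≤ Cbound)
    (Cbound' : ℝ) (hWbound : ∀ k, specNorm (Wk k) ≤ Cbound')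
    (hδ : Tendsto (fun k => _root_.enorm (b - (Ak k).mulVec (xk k))) atTop (nhds 0))
    (hAdiff : Tendsto (fun k => specNorm (Ak (k + 1) - Ak k)) atTop (nhds 0))
    (hAhdiff : Tendsto (fun k => specNorm (Ahk (k + 1) - Ahk k)) atTop (nhds 0)) :
    Tendsto ηk atTop (nhds 0) := by
  have hC0 : (0:ℝ) ≤ Cbound := le_trans (specNorm_nonneg _) (hinvbound 0)
  set δ : ℕ → ℝ := fun k => _root_.enorm (b - (Ak k).mulVec (xk k)) with hδdef
  have hxk : ∀ k, _root_.enorm (xk k) ≤ Cbound * (_root_.enorm b + δ k) := by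
    intro k
    have h1 : xk k = ((Ak k)⁻¹).mulVec ((Ak k).mulVec (xk k)) := by
      rw [Matrix.mulVec_mulVec, Matrix.nonsing_inv_mul _ (hinv k), Matrix.one_mulVec]
    have h2 : _root_.enorm ((Ak k).mulVec (xk k)) ≤ _root_.enorm b + δ k := by
      have h3 : (Ak k).mulVec (xk k) = b - (b - (Ak k).mulVec (xk k)) := by
        simp
      rw [h3]
      exact enorm_sub_le_vec _ _
    calc _root_.enorm (xk k) = _root_.enorm (((Ak k)⁻¹).mulVec ((Ak k).mulVec (xk k))) := by rw [← h1]
    _ ≤ specNorm (Ak k)⁻¹ * _root_.enorm ((Ak k).mulVec (xk k)) := enorm_mulVec_le _ _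
    _ ≤ Cbound * (_root_.enorm b + δ k) :=
        mul_le_mul (hinvbound k) h2 (enorm_nonneg _) hC0
  set D : ℕ → Matrix (Fin N) (Fin N) ℝ := fun k => Ak (k + 1) - Ak k with hDdef
  have key : ∀ k, θ ^ 2 * ηk k ^ 2 ≤
      (Cbound * (_root_.enorm b + δ k)) ^ 2 * ((N : ℝ) * specNorm (D k) ^ 2) := by
    intro k
    have hDW : ∀ p ∈ Mk k, ∀ i ∈ p.1, ∀ j ∈ p.2, D k i j = -(Wk k i j) := by
      intro p hp i hi j hj
      have hu := hupdate k i j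
      rw [if_pos ⟨p, hp, hi, hj⟩] at hu
      simp only [hDdef, Matrix.sub_apply, hu, hW]
      ring
    have step1 : θ ^ 2 * ηk k ^ 2 ≤ ∑ p ∈ Mk k, blockNormSq (D k) p.1 p.2 (xk k) := by
      refine (hmark k).trans (le_of_eq (Finset.sum_congr rfl fun p hp => ?_))
      unfold blockNormSq
      refine Finset.sum_congr rfl fun i hi => ?_
      have : ∑ j ∈ p.2, D k i j * xk k j = -∑ j ∈ p.2, Wk k i j * xk k j := by
        rw [← Finset.sum_neg_distrib]
        exact Finset.sum_congr rfl fun j hj => by rw [hDW p hp i hi j hj]; ring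
      rw [this, neg_sq]
    have hx2 : ∀ s : Finset (Fin N), ∑ j ∈ s, xk k j ^ 2 ≤ _root_.enorm (xk k) ^ 2 := by
      intro s
      rw [enorm_sq]
      exact Finset.sum_le_sum_of_subset_of_nonneg (Finset.subset_univ s)
        (fun _ _ _ => sq_nonneg _)
    have step2 : ∑ p ∈ Mk k, blockNormSq (D k) p.1 p.2 (xk k) ≤
        (∑ p ∈ Mk k, ∑ ij ∈ p.1 ×ˢ p.2, D k ij.1 ij.2 ^ 2) * _root_.enorm (xk k) ^ 2 := by
      rw [Finset.sum_mul]
      refine Finset.sum_le_sum fun p hp => ?_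
      unfold blockNormSq
      rw [Finset.sum_product, Finset.sum_mul]
      refine Finset.sum_le_sum fun i hi => ?_
      calc (∑ j ∈ p.2, D k i j * xk k j) ^ 2
          ≤ (∑ j ∈ p.2, D k i j ^ 2) * ∑ j ∈ p.2, xk k j ^ 2 :=
            Finset.sum_mul_sq_le_sq_mul_sq p.2 (fun j => D k i j) (xk k)
        _ ≤ (∑ j ∈ p.2, D k i j ^ 2) * _root_.enorm (xk k) ^ 2 :=
            mul_le_mul_of_nonneg_left (hx2 p.2)
              (Finset.sum_nonneg fun j _ => sq_nonneg _)
    have hdisj : (↑(Mk k) : Set (Finset (Fin N) × Finset (Fin N))).PairwiseDisjoint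
        (fun p => p.1 ×ˢ p.2) := fun p hp q hq hne =>
      C.prod_disjoint p (hMk k hp) q (hMk k hq) hne
    have step3 : ∑ p ∈ Mk k, ∑ ij ∈ p.1 ×ˢ p.2, D k ij.1 ij.2 ^ 2 ≤
        (N : ℝ) * specNorm (D k) ^ 2 := by
      rw [← Finset.sum_biUnion hdisj]
      calc ∑ ij ∈ (Mk k).biUnion (fun p => p.1 ×ˢ p.2), D k ij.1 ij.2 ^ 2
          ≤ ∑ ij : Fin N × Fin N, D k ij.1 ij.2 ^ 2 :=
            Finset.sum_le_sum_of_subset_of_nonneg (Finset.subset_univ _)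
              (fun _ _ _ => sq_nonneg _)
        _ = ∑ i, ∑ j, D k i j ^ 2 := by
            rw [← Finset.univ_product_univ, Finset.sum_product]
        _ ≤ (N : ℝ) * specNorm (D k) ^ 2 := frob_le_specNorm (D k)
    calc θ ^ 2 * ηk k ^ 2
        ≤ (∑ p ∈ Mk k, ∑ ij ∈ p.1 ×ˢ p.2, D k ij.1 ij.2 ^ 2) * _root_.enorm (xk k) ^ 2 :=
          step1.trans step2
      _ ≤ ((N : ℝ) * specNorm (D k) ^ 2) * (Cbound * (_root_.enorm b + δ k)) ^ 2 := by
          refine mul_le_mul step3 ?_ (sq_nonneg _) ?_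
          · exact pow_le_pow_left₀ (enorm_nonneg _) (hxk k) 2
          · exact mul_nonneg (Nat.cast_nonneg N) (sq_nonneg _)
      _ = (Cbound * (_root_.enorm b + δ k)) ^ 2 * ((N : ℝ) * specNorm (D k) ^ 2) :=
          mul_comm _ _
  set g : ℕ → ℝ := fun k =>
    (θ ^ 2)⁻¹ * ((Cbound * (_root_.enorm b + δ k)) ^ 2 * ((N : ℝ) * specNorm (D k) ^ 2)) with hgdef
  have hθ2 : (0:ℝ) < θ ^ 2 := pow_pos hθ0 2
  have hbound : ∀ k, ηk k ^ 2 ≤ g k := by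
    intro k
    show ηk k ^ 2 ≤ (θ ^ 2)⁻¹ * ((Cbound * (_root_.enorm b + δ k)) ^ 2 * ((N : ℝ) * specNorm (D k) ^ 2))
    calc ηk k ^ 2 = (θ ^ 2)⁻¹ * (θ ^ 2 * ηk k ^ 2) := by
          field_simp
      _ ≤ (θ ^ 2)⁻¹ * ((Cbound * (_root_.enorm b + δ k)) ^ 2 * ((N : ℝ) * specNorm (D k) ^ 2)) :=
          mul_le_mul_of_nonneg_left (key k) (inv_nonneg.mpr hθ2.le)
  have hg : Tendsto g atTop (nhds 0) := by
    have h1 : Tendsto (fun k => (Cbound * (_root_.enorm b + δ k)) ^ 2) atTop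
        (nhds ((Cbound * (_root_.enorm b + 0)) ^ 2)) :=
      ((tendsto_const_nhds.add hδ).const_mul Cbound).pow 2
    have h2 : Tendsto (fun k => (N : ℝ) * specNorm (D k) ^ 2) atTop
        (nhds ((N : ℝ) * 0 ^ 2)) := (hAdiff.pow 2).const_mul (N : ℝ)
    have h3 := ((h1.mul h2).const_mul ((θ ^ 2)⁻¹))
    simpa using h3
  have hsq : Tendsto (fun k => ηk k ^ 2) atTop (nhds 0) :=
    squeeze_zero (fun k => sq_nonneg _) hbound hg
  have h4 := (Real.continuous_sqrt.tendsto 0).comp hsq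
  simp only [Function.comp_def, Real.sqrt_zero] at h4
  have heq : (fun k => Real.sqrt (ηk k ^ 2)) = ηk :=
    funext fun k => Real.sqrt_sq (hηk0 k)
  rwa [heq] at h4
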